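/- A finite group G is nilpotent if and only if it satisfies one of the following conditions: (1) for every maximal subgroup M of G, every Sylow subgroup of M is F*(G)-conjugate-permutable in G; (2) for every maximal subgroup M of G and every Sylow subgroup P of M, the normalizer N_M(P) is F*(G)-conjugate-permutable in G. -/

import Mathlib

open scoped Pointwise

section Defs

variable {G : Type*} [Group G]

/-- The conjugate `H^x = x⁻¹ H x` of a subgroup `H` of `G`. -/
def conjS (x : G) (H : Subgroup G) : Subgroup G :=
  H.map (MulAut.conj x⁻¹).toMonoidHom

/-- A subgroup `H` of `G` is `R`-conjugate-permutable (for a subset `R ⊆ G`) if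
`H · H^x = H^x · H` as subsets of `G`, for all `x ∈ R`. -/
def IsRCP (R : Set G) (H : Subgroup G) : Prop :=
  ∀ x ∈ R, (H : Set G) * (conjS x H : Set G) = (conjS x H : Set G) * (H : Set G)

/-- A subgroup `H` of `G` is conjugate-permutable if `H · H^x = H^x · H` for all `x ∈ G`. -/
def IsConjPermutable (H : Subgroup G) : Prop :=
  IsRCP (Set.univ : Set G) H

/-- `N` is a minimal normal subgroup of `G`. -/
def IsMinimalNormal (N : Subgroup G) : Prop :=
  N.Normal ∧ N ≠ ⊥ ∧ ∀ K : Subgroup G, K.Normal → K ≤ N → K = ⊥ ∨ K = N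

/-- `H` is an abnormal subgroup of `G`: `x ∈ ⟨H, H^x⟩` for all `x ∈ G`. -/
def IsAbnormal (H : Subgroup G) : Prop :=
  ∀ x : G, x ∈ H ⊔ conjS x H

/-- `H` is normal in the subgroup `K` of `G`. -/
def IsNormalIn (H K : Subgroup G) : Prop :=
  H ≤ K ∧ ∀ x ∈ K, ∀ h ∈ H, x * h * x⁻¹ ∈ H

/-- `H` is subnormal in the subgroup `K`: there is a chain
`H = H₀ ◁ H₁ ◁ ⋯ ◁ Hₙ = K` with each term normal in the next. -/
def IsSubnormalIn (H K : Subgroup G) : Prop :=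
  ∃ (n : ℕ) (s : Fin (n + 1) → Subgroup G),
    s 0 = H ∧ s (Fin.last n) = K ∧
    ∀ i : Fin n, s i.castSucc ≤ s i.succ ∧
      ∀ x ∈ s i.succ, ∀ h ∈ s i.castSucc, x * h * x⁻¹ ∈ s i.castSucc

/-- `H` is pronormal in the subgroup `K`: for every `x ∈ K`, the subgroups `H` and `H^x`
are conjugate in `⟨H, H^x⟩`. -/
def IsPronormalIn (H K : Subgroup G) : Prop :=
  H ≤ K ∧ ∀ x ∈ K, ∃ k ∈ H ⊔ conjS x H, conjS k H = conjS x H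

end Defs

/-- The socle of `G`: the subgroup generated by all minimal normal subgroups of `G`. -/
def socle' (G : Type*) [Group G] : Subgroup G :=
  sSup {N : Subgroup G | IsMinimalNormal N}

/-- `F̃(G)`: the subgroup of `G` containing the Frattini subgroup `Φ(G)` with
`F̃(G)/Φ(G) = Soc(G/Φ(G))`. -/
def Ftilde (G : Type*) [Group G] : Subgroup G :=
  (socle' (G ⧸ frattini G)).comap (QuotientGroup.mk' (frattini G))

/-- The Fitting subgroup `F(G)`: the largest normal nilpotent subgroup of `G`
(the subgroup generated by all normal nilpotent subgroups). -/
def Fitting (G : Type*) [Group G] : Subgroup G :=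
  sSup {N : Subgroup G | N.Normal ∧ Group.IsNilpotent N}

section FittingNormal

variable {G : Type*} [Group G]

lemma map_conj_eq_self {N : Subgroup G} (hN : N.Normal) (g : G) :
    N.map (MulAut.conj g).toMonoidHom = N := by
  ext x
  simp only [Subgroup.mem_map, MulEquiv.coe_toMonoidHom, MulAut.conj_apply]
  constructor
  · rintro ⟨n, hn, rfl⟩; exact hN.conj_mem n hn g
  · intro hx
    refine ⟨g⁻¹ * x * g, by simpa using hN.conj_mem x hx g⁻¹, by group⟩

instance Fitting_normal (G : Type*) [Group G] : (Fitting G).Normal := by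
  constructor
  intro n hn g
  have h1 : (Fitting G).map (MulAut.conj g).toMonoidHom = Fitting G := by
    unfold Fitting
    rw [sSup_eq_iSup, Subgroup.map_iSup]
    refine iSup_congr fun N => ?_
    rw [Subgroup.map_iSup]
    exact iSup_congr_Prop Iff.rfl fun hN => map_conj_eq_self hN.1 g
  rw [← h1]
  exact Subgroup.mem_map.2 ⟨n, hn, rfl⟩

end FittingNormal

/-- The generalized Fitting subgroup `F*(G)`: the subgroup containing `F(G)` with
`F*(G)/F(G) = Soc(C_G(F(G))·F(G)/F(G))`. -/
def FStar (G : Type*) [Group G] : Subgroup G :=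
  Subgroup.comap (QuotientGroup.mk' (Fitting G))
    (Subgroup.map
      ((Subgroup.centralizer (Fitting G : Set G) ⊔ Fitting G).map
          (QuotientGroup.mk' (Fitting G))).subtype
      (socle' ((Subgroup.centralizer (Fitting G : Set G) ⊔ Fitting G).map
          (QuotientGroup.mk' (Fitting G)))))

/-- A group is supersoluble if it has a normal series all of whose terms are
normal in the whole group and all of whose factors are cyclic; the factor
`s (i+1) / s i` being cyclic is expressed by `s (i+1) ≤ s i ⊔ ⟨g⟩` for some `g`. -/
def IsSupersoluble (G : Type*) [Group G] : Prop :=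
  ∃ (n : ℕ) (s : Fin (n + 1) → Subgroup G),
    Monotone s ∧ s 0 = ⊥ ∧ s (Fin.last n) = ⊤ ∧ (∀ i, (s i).Normal) ∧
    ∀ i : Fin n, ∃ g : G, s i.succ ≤ s i.castSucc ⊔ Subgroup.zpowers g

/-- A group is metanilpotent if it has a normal nilpotent subgroup with
nilpotent quotient. -/
def IsMetanilpotent (G : Type*) [Group G] : Prop :=
  ∃ (N : Subgroup G) (hN : N.Normal),
    Group.IsNilpotent N ∧
      @Group.IsNilpotent (G ⧸ N) (@QuotientGroup.Quotient.group G _ N hN)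

section Layer1

variable {G : Type*} [Group G]

lemma mem_conjS {x g : G} {H : Subgroup G} : g ∈ conjS x H ↔ x * g * x⁻¹ ∈ H := by
  constructor
  · rintro ⟨h, hh, rfl⟩
    simp only [MulEquiv.coe_toMonoidHom, MulAut.conj_apply, inv_inv]
    have e : x * (x⁻¹ * h * x) * x⁻¹ = h := by group
    rw [e]; exact hh
  · intro hg
    exact ⟨x * g * x⁻¹, hg, by
      simp only [MulEquiv.coe_toMonoidHom, MulAut.conj_apply, inv_inv]; group⟩

lemma conjS_mono {x : G} {H K : Subgroup G} (h : H ≤ K) : conjS x H ≤ conjS x K :=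
  Subgroup.map_mono h

lemma conjS_conjS_cancel (x : G) (H : Subgroup G) : conjS x⁻¹ (conjS x H) = H := by
  ext g
  simp only [mem_conjS, inv_inv]
  constructor
  · intro h; convert h using 2; group
  · intro h; convert h using 2; group

/-- if `H` and `K` permute then the coe of their sup is the product set. -/
lemma coe_sup_of_mul_comm {H K : Subgroup G}
    (hc : (H : Set G) * (K : Set G) = (K : Set G) * (H : Set G)) :
    ((H ⊔ K : Subgroup G) : Set G) = (H : Set G) * (K : Set G) := by
  have hsub : ∃ J : Subgroup G, (J : Set G) = (H : Set G) * (K : Set G) := by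
    refine ⟨{ carrier := (H : Set G) * (K : Set G),
              one_mem' := ⟨1, one_mem H, 1, one_mem K, one_mul 1⟩,
              mul_mem' := ?_, inv_mem' := ?_ }, rfl⟩
    · rintro a b ⟨h1, hh1, k1, hk1, rfl⟩ ⟨h2, hh2, k2, hk2, rfl⟩
      have : (k1 : G) * h2 ∈ (K : Set G) * (H : Set G) := ⟨k1, hk1, h2, hh2, rfl⟩
      rw [← hc] at this
      obtain ⟨h3, hh3, k3, hk3, heq⟩ := this
      have heq' : h3 * k3 = k1 * h2 := heq
      refine ⟨h1 * h3, mul_mem hh1 hh3, k3 * k2, mul_mem hk3 hk2, ?_⟩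
      show (h1 * h3) * (k3 * k2) = (h1 * k1) * (h2 * k2)
      calc (h1 * h3) * (k3 * k2) = h1 * (h3 * k3) * k2 := by group
      _ = h1 * (k1 * h2) * k2 := by rw [heq']
      _ = (h1 * k1) * (h2 * k2) := by group
    · rintro a ⟨h1, hh1, k1, hk1, rfl⟩
      have : (k1⁻¹ : G) * h1⁻¹ ∈ (K : Set G) * (H : Set G) := ⟨k1⁻¹, inv_mem hk1, h1⁻¹, inv_mem hh1, rfl⟩
      rw [← hc] at this
      simpa [mul_inv_rev] using this
  obtain ⟨J, hJ⟩ := hsub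
  apply le_antisymm
  · have hHJ : H ≤ J := by
      intro h hh
      rw [← SetLike.mem_coe, hJ]
      exact ⟨h, hh, 1, one_mem K, mul_one h⟩
    have hKJ : K ≤ J := by
      intro k hk
      rw [← SetLike.mem_coe, hJ]
      exact ⟨1, one_mem H, k, hk, one_mul k⟩
    rw [← hJ]
    exact SetLike.coe_subset_coe.mpr (sup_le hHJ hKJ)
  · rintro a ⟨h, hh, k, hk, rfl⟩
    exact mul_mem (SetLike.mem_coe.mpr (Subgroup.mem_sup_left hh))
      (SetLike.mem_coe.mpr (Subgroup.mem_sup_right hk))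

/-- Foguel's trick. -/
lemma mem_of_mem_mul_conjS {H : Subgroup G} {x : G}
    (hx : x ∈ (H : Set G) * (conjS x H : Set G)) : x ∈ H := by
  obtain ⟨h, hh, y, hy, hxy⟩ := hx
  obtain ⟨m, hm, rfl⟩ := hy
  simp only [MulEquiv.coe_toMonoidHom, MulAut.conj_apply, inv_inv] at hxy
  -- hxy : h * (x⁻¹ * m * x) = x
  have h1 : h⁻¹ * x = x⁻¹ * m * x := by
    conv_lhs => rw [← hxy]
    group
  have key : m = x * h⁻¹ := by
    have h2 := congrArg (fun t => x * t * x⁻¹) h1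
    calc m = x * (x⁻¹ * m * x) * x⁻¹ := by group
    _ = x * (h⁻¹ * x) * x⁻¹ := h2.symm
    _ = x * h⁻¹ := by group
  have hxm : x = m * h := by rw [key]; group
  rw [hxm]
  exact mul_mem hm hh

lemma exists_le_coatom_of_ne_top [Finite G] {H : Subgroup G} (h : H ≠ ⊤) :
    ∃ M : Subgroup G, IsCoatom M ∧ H ≤ M := by
  have : Finite (Subgroup G) :=
    Finite.of_injective (fun K : Subgroup G => (K : Set G)) SetLike.coe_injective
  rcases (Finite.to_isCoatomic (α := Subgroup G)).eq_top_or_exists_le_coatom H with h' | h'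
  · exact absurd h' h
  · obtain ⟨M, hM, hHM⟩ := h'
    exact ⟨M, hM, hHM⟩

lemma subgroup_card_lt [Finite G] {H K : Subgroup G} (h : H < K) :
    Nat.card H < Nat.card K := by
  have h1 : (H : Set G) ⊂ (K : Set G) := SetLike.coe_ssubset_coe.mpr h
  have := Set.ncard_lt_ncard h1 (Set.toFinite _)
  rw [← Nat.card_coe_set_eq, ← Nat.card_coe_set_eq] at this; exact this

lemma exists_isMinimalNormal_le [Finite G] :
    ∀ n : ℕ, ∀ N : Subgroup G, Nat.card N ≤ n → N.Normal → N ≠ ⊥ →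
      ∃ N' : Subgroup G, IsMinimalNormal N' ∧ N' ≤ N := by
  intro n
  induction n with
  | zero => intro N hle _ _; exact absurd (Nat.le_zero.mp hle) Nat.card_pos.ne'
  | succ n ih =>
    intro N hle hN hNbot
    by_cases hmin : ∀ K : Subgroup G, K.Normal → K ≤ N → K = ⊥ ∨ K = N
    · exact ⟨N, ⟨hN, hNbot, hmin⟩, le_rfl⟩
    · push_neg at hmin
      obtain ⟨K, hKn, hKN, hK1, hK2⟩ := hmin
      have hlt : Nat.card K < Nat.card N := subgroup_card_lt (lt_of_le_of_ne hKN hK2)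
      obtain ⟨N', hN', hN'K⟩ := ih K (by omega) hKn hK1
      exact ⟨N', hN', hN'K.trans hKN⟩

lemma exists_isMinimalNormal [Finite G] [Nontrivial G] :
    ∃ N : Subgroup G, IsMinimalNormal N := by
  have hne : (⊤ : Subgroup G) ≠ ⊥ := by
    obtain ⟨x, hx⟩ := exists_ne (1 : G)
    intro hcon
    have hx2 : x ∈ (⊥ : Subgroup G) := by rw [← hcon]; exact Subgroup.mem_top x
    exact hx (by simpa using hx2)
  obtain ⟨N, hN, -⟩ := exists_isMinimalNormal_le (Nat.card (⊤ : Subgroup G)) (⊤ : Subgroup G)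
    le_rfl inferInstance hne
  exact ⟨N, hN⟩

lemma subgroup_eq_of_le_of_card_le [Finite G] {H K : Subgroup G} (h : H ≤ K)
    (hc : Nat.card K ≤ Nat.card H) : H = K := by
  apply SetLike.coe_injective
  apply Set.eq_of_subset_of_ncard_le (SetLike.coe_subset_coe.mpr h) _ (Set.toFinite _)
  rw [← Nat.card_coe_set_eq, ← Nat.card_coe_set_eq]; exact hc

end Layer1
section Layer2

variable {A B : Type*} [Group A] [Group B]

lemma map_symm_map (e : A ≃* B) (H : Subgroup A) :
    (H.map e.toMonoidHom).map e.symm.toMonoidHom = H := by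
  rw [Subgroup.map_map]
  have h : (e.symm.toMonoidHom.comp e.toMonoidHom) = MonoidHom.id A := by
    ext x; simp
  rw [h, Subgroup.map_id]

lemma map_map_symm (e : A ≃* B) (H : Subgroup B) :
    (H.map e.symm.toMonoidHom).map e.toMonoidHom = H := by
  rw [Subgroup.map_map]
  have h : (e.toMonoidHom.comp e.symm.toMonoidHom) = MonoidHom.id B := by
    ext x; simp
  rw [h, Subgroup.map_id]

lemma isMinimalNormal_map (e : A ≃* B) {N : Subgroup A} (h : IsMinimalNormal N) :
    IsMinimalNormal (N.map e.toMonoidHom) := by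
  obtain ⟨hnorm, hbot, hmin⟩ := h
  refine ⟨hnorm.map e.toMonoidHom e.surjective, ?_, ?_⟩
  · intro hcon
    apply hbot
    have h := congrArg (Subgroup.map e.symm.toMonoidHom) hcon
    rwa [map_symm_map, Subgroup.map_bot] at h
  · intro K hK hKle
    have h2 : K.map e.symm.toMonoidHom ≤ N := by
      have := Subgroup.map_mono (f := e.symm.toMonoidHom) hKle
      rwa [map_symm_map] at this
    rcases hmin _ (hK.map e.symm.toMonoidHom e.symm.surjective) h2 with h | h
    · left
      have := congrArg (Subgroup.map e.toMonoidHom) h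
      rwa [map_map_symm, Subgroup.map_bot] at this
    · right
      have := congrArg (Subgroup.map e.toMonoidHom) h
      rwa [map_map_symm] at this

lemma socle'_map (e : A ≃* B) : (socle' A).map e.toMonoidHom = socle' B := by
  apply le_antisymm
  · apply Subgroup.map_le_iff_le_comap.mpr
    apply sSup_le
    intro N hN
    apply Subgroup.map_le_iff_le_comap.mp
    exact le_sSup (isMinimalNormal_map e hN)
  · apply sSup_le
    intro K hK
    have h : K = (K.map e.symm.toMonoidHom).map e.toMonoidHom := (map_map_symm e K).symm
    rw [h]
    exact Subgroup.map_mono (le_sSup (isMinimalNormal_map e.symm hK))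

variable {G : Type*} [Group G]

lemma map_conj_centralizer_eq (g : G) {N : Subgroup G} (hN : N.Normal) :
    (Subgroup.centralizer (N : Set G)).map (MulAut.conj g).toMonoidHom
      = Subgroup.centralizer (N : Set G) := by
  ext x
  simp only [Subgroup.mem_map, MulEquiv.coe_toMonoidHom, MulAut.conj_apply]
  constructor
  · rintro ⟨c, hc, rfl⟩
    rw [Subgroup.mem_centralizer_iff]
    intro y hy
    have hy' : g⁻¹ * y * g ∈ N := by
      have h := hN.conj_mem y hy g⁻¹
      simpa using h
    have hcy := (Subgroup.mem_centralizer_iff.mp hc) _ hy'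
    calc y * (g * c * g⁻¹) = g * ((g⁻¹ * y * g) * c) * g⁻¹ := by group
    _ = g * (c * (g⁻¹ * y * g)) * g⁻¹ := by rw [hcy]
    _ = (g * c * g⁻¹) * y := by group
  · intro hx
    refine ⟨g⁻¹ * x * g, ?_, by group⟩
    rw [Subgroup.mem_centralizer_iff]
    intro y hy
    have hy' : g * y * g⁻¹ ∈ N := hN.conj_mem y hy g
    have hxy := Subgroup.mem_centralizer_iff.mp hx _ hy'
    calc y * (g⁻¹ * x * g) = g⁻¹ * ((g * y * g⁻¹) * x) * g := by group
    _ = g⁻¹ * (x * (g * y * g⁻¹)) * g := by rw [hxy]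
    _ = (g⁻¹ * x * g) * y := by group

lemma map_conj_comap_mk' (g : G) (N : Subgroup G) [N.Normal] (X : Subgroup (G ⧸ N)) :
    (X.comap (QuotientGroup.mk' N)).map (MulAut.conj g).toMonoidHom
      = (X.map (MulAut.conj (QuotientGroup.mk g : G ⧸ N)).toMonoidHom).comap
          (QuotientGroup.mk' N) := by
  ext x
  simp only [Subgroup.mem_map, Subgroup.mem_comap, MulEquiv.coe_toMonoidHom, MulAut.conj_apply,
    QuotientGroup.mk'_apply]
  constructor
  · rintro ⟨a, ha, rfl⟩
    refine ⟨QuotientGroup.mk a, ha, ?_⟩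
    rw [← QuotientGroup.mk_inv, ← QuotientGroup.mk_mul, ← QuotientGroup.mk_mul]
  · rintro ⟨b, hb, hbx⟩
    refine ⟨g⁻¹ * x * g, ?_, by group⟩
    have hmk : QuotientGroup.mk (g⁻¹ * x * g) =
        (QuotientGroup.mk g : G ⧸ N)⁻¹ * QuotientGroup.mk x * QuotientGroup.mk g := by
      rw [← QuotientGroup.mk_inv, ← QuotientGroup.mk_mul, ← QuotientGroup.mk_mul]
    rw [hmk, ← hbx]
    have h2 : (QuotientGroup.mk g : G ⧸ N)⁻¹ *
        (QuotientGroup.mk g * b * (QuotientGroup.mk g : G ⧸ N)⁻¹) * QuotientGroup.mk g = b := by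
      group
    rw [h2]
    exact hb

lemma Fitting_le_FStar (G : Type*) [Group G] : Fitting G ≤ FStar G := by
  intro x hx
  rw [FStar, Subgroup.mem_comap]
  have h : QuotientGroup.mk' (Fitting G) x = 1 := by
    rw [QuotientGroup.mk'_apply, QuotientGroup.eq_one_iff]
    exact hx
  rw [h]
  exact Subgroup.one_mem _

instance FStar_normal (G : Type*) [Group G] : (FStar G).Normal := by
  constructor
  intro n hn g
  suffices h : (FStar G).map (MulAut.conj g).toMonoidHom = FStar G by
    rw [← h]; exact Subgroup.mem_map.2 ⟨n, hn, rfl⟩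
  rw [FStar, map_conj_comap_mk' g]
  congr 1
  set F := Fitting G
  set C := Subgroup.centralizer (F : Set G)
  set S := (C ⊔ F).map (QuotientGroup.mk' F) with hS
  set q : G ⧸ F := QuotientGroup.mk g with hq
  have hcomm : ((MulAut.conj q).toMonoidHom.comp (QuotientGroup.mk' F))
      = (QuotientGroup.mk' F).comp (MulAut.conj g).toMonoidHom := by
    ext x
    simp only [MonoidHom.comp_apply, MulEquiv.coe_toMonoidHom, MulAut.conj_apply,
      QuotientGroup.mk'_apply, hq]
    rw [← QuotientGroup.mk_inv, ← QuotientGroup.mk_mul, ← QuotientGroup.mk_mul]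
  have hSinv : S.map (MulAut.conj q).toMonoidHom = S := by
    rw [hS, Subgroup.map_map, hcomm, ← Subgroup.map_map, Subgroup.map_sup,
      map_conj_centralizer_eq g (by infer_instance), map_conj_eq_self (by infer_instance) g]
  set e : ↥S ≃* ↥S :=
    ((MulAut.conj q : (G ⧸ F) ≃* (G ⧸ F)).subgroupMap S).trans
      (MulEquiv.subgroupCongr hSinv) with he
  have hce : (MulAut.conj q).toMonoidHom.comp S.subtype = S.subtype.comp e.toMonoidHom := by
    ext x
    rfl
  rw [Subgroup.map_map, hce, ← Subgroup.map_map, socle'_map e]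

end Layer2
set_option linter.unusedSectionVars false

section Layer3

variable {G : Type*} [Group G] [Finite G]

lemma card_conjS (x : G) (H : Subgroup G) : Nat.card (conjS x H) = Nat.card H := by
  have hinj : Function.Injective ⇑((MulAut.conj x⁻¹).toMonoidHom) := (MulAut.conj x⁻¹).injective
  exact (Nat.card_congr (H.equivMapOfInjective (MulAut.conj x⁻¹).toMonoidHom hinj).toEquiv).symm

lemma map_subtype_normalizer_eq {M H : Subgroup G} (h : Subgroup.normalizer (H : Set G) ≤ M) :
    Subgroup.map M.subtype (Subgroup.normalizer ((H.subgroupOf M) : Set ↥M)) = Subgroup.normalizer (H : Set G) := by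
  rw [← Subgroup.subgroupOf_normalizer_eq (le_trans Subgroup.le_normalizer h), Subgroup.subgroupOf_map_subtype,
    inf_of_le_left h]

lemma card_quotient_dvd_of_mul_eq {J H K : Subgroup G} (hHJ : H ≤ J) (hKJ : K ≤ J)
    (hcov : (J : Set G) ⊆ (K : Set G) * (H : Set G)) :
    Nat.card (↥J ⧸ H.subgroupOf J) ∣ Nat.card K := by
  set H' := H.subgroupOf J with hH'
  set K' := K.subgroupOf J with hK'
  set R := (H' ⊓ K').subgroupOf K' with hR
  have hwd : ∀ a b : ↥K', (QuotientGroup.leftRel R).r a b →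
      (QuotientGroup.mk (K'.subtype a) : ↥J ⧸ H') = QuotientGroup.mk (K'.subtype b) := by
    intro a b hab
    have hab' : a⁻¹ * b ∈ R := QuotientGroup.leftRel_apply.mp hab
    rw [QuotientGroup.eq]
    have h1 := (Subgroup.mem_subgroupOf.mp hab').1
    simpa using h1
  let g : (↥K' ⧸ R) → (↥J ⧸ H') := fun q =>
    Quotient.liftOn' q (fun a => QuotientGroup.mk (K'.subtype a)) hwd
  have hginj : Function.Injective g := by
    intro q1 q2
    induction q1 using Quotient.inductionOn' with
    | h a =>
    induction q2 using Quotient.inductionOn' with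
    | h b =>
    intro hab
    have hab' : (QuotientGroup.mk (K'.subtype a) : ↥J ⧸ H') = QuotientGroup.mk (K'.subtype b) := hab
    rw [QuotientGroup.eq] at hab'
    apply Quotient.sound'
    rw [QuotientGroup.leftRel_apply]
    rw [hR, Subgroup.mem_subgroupOf]
    refine ⟨?_, ?_⟩
    · simpa using hab'
    · exact Subgroup.mul_mem _ (Subgroup.inv_mem _ a.2) b.2
  have hgsurj : Function.Surjective g := by
    intro j
    induction j using Quotient.inductionOn' with
    | h u =>
    have hu : (↑u : G) ∈ ((K : Set G) * (H : Set G)) := hcov u.2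
    obtain ⟨q, hq, a, ha, hqa⟩ := hu
    have hqJ : q ∈ J := hKJ hq
    refine ⟨Quotient.mk'' ⟨⟨q, hqJ⟩, Subgroup.mem_subgroupOf.mpr hq⟩, ?_⟩
    have : g (Quotient.mk'' ⟨⟨q, hqJ⟩, Subgroup.mem_subgroupOf.mpr hq⟩)
        = (QuotientGroup.mk (⟨q, hqJ⟩ : ↥J) : ↥J ⧸ H') := rfl
    rw [this]
    have hgoal : (QuotientGroup.mk (⟨q, hqJ⟩ : ↥J) : ↥J ⧸ H') = QuotientGroup.mk u := by
      rw [QuotientGroup.eq]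
      rw [Subgroup.mem_subgroupOf]
      have h2 : q⁻¹ * (↑u : G) = a := by rw [← hqa]; group
      show ((⟨q, hqJ⟩ : ↥J)⁻¹ * u : ↥J).1 ∈ H
      have h3 : ((⟨q, hqJ⟩ : ↥J)⁻¹ * u : ↥J).1 = q⁻¹ * (↑u : G) := rfl
      rw [h3, h2]
      exact ha
    exact hgoal
  calc Nat.card (↥J ⧸ H') = Nat.card (↥K' ⧸ R) :=
        (Nat.card_congr (Equiv.ofBijective g ⟨hginj, hgsurj⟩)).symm
  _ ∣ Nat.card ↥K' := Subgroup.card_quotient_dvd_card R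
  _ = Nat.card K := Nat.card_congr (Subgroup.subgroupOfEquivOfLe hKJ).toEquiv

lemma sylow_perm_case1 {p : ℕ} [Fact p.Prime] (P : Sylow p G) {x : G}
    (h : (((P : Subgroup G) : Set G) * (conjS x (P : Subgroup G) : Subgroup G) : Set G)
       = (conjS x (P : Subgroup G) : Subgroup G) * ((P : Subgroup G) : Set G)) :
    x ∈ (Subgroup.normalizer ((P : Subgroup G) : Set G)) := by
  set J := (P : Subgroup G) ⊔ conjS x (P : Subgroup G) with hJ
  have hJcoe : (J : Set G) = ((P : Subgroup G) : Set G) * (conjS x (P : Subgroup G) : Set G) :=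
    coe_sup_of_mul_comm h
  have hJcoe2 : (J : Set G) = (conjS x (P : Subgroup G) : Set G) * ((P : Subgroup G) : Set G) := by
    rw [hJcoe, h]
  have hPJ : (P : Subgroup G) ≤ J := le_sup_left
  have hQJ : conjS x (P : Subgroup G) ≤ J := le_sup_right
  have hdvd1 : Nat.card (↥J ⧸ (P : Subgroup G).subgroupOf J)
      ∣ Nat.card (conjS x (P : Subgroup G)) :=
    card_quotient_dvd_of_mul_eq hPJ hQJ (by rw [hJcoe2])
  have hcardJ : Nat.card ↥J
      = Nat.card (↥J ⧸ (P : Subgroup G).subgroupOf J) * Nat.card ((P : Subgroup G).subgroupOf J) :=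
    Subgroup.card_eq_card_quotient_mul_card_subgroup _
  have hcardP' : Nat.card ((P : Subgroup G).subgroupOf J) = Nat.card (P : Subgroup G) :=
    Nat.card_congr (Subgroup.subgroupOfEquivOfLe hPJ).toEquiv
  obtain ⟨a, hPa⟩ := IsPGroup.iff_card.mp P.2
  have hQcard : Nat.card (conjS x (P : Subgroup G)) = p ^ a := by
    rw [card_conjS]; exact hPa
  have hdvd2 : Nat.card ↥J ∣ p ^ a * p ^ a := by
    rw [hcardJ, hcardP', hPa]
    exact Nat.mul_dvd_mul (by rw [← hQcard]; exact hdvd1) dvd_rfl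
  rw [← pow_add] at hdvd2
  obtain ⟨n, -, hn⟩ := (Nat.dvd_prime_pow (Fact.out : p.Prime)).mp hdvd2
  have hJp : IsPGroup p ↥J := IsPGroup.iff_card.mpr ⟨n, hn⟩
  have hJeq : J = (P : Subgroup G) := P.3 hJp hPJ
  have hQP : conjS x (P : Subgroup G) = (P : Subgroup G) := by
    apply subgroup_eq_of_le_of_card_le (hJeq ▸ hQJ)
    rw [hQcard, hPa]
  rw [Subgroup.mem_normalizer_iff]
  intro h'
  rw [← mem_conjS, hQP]

lemma sylow_perm_case2 {p : ℕ} [Fact p.Prime] (P : Sylow p G) {x : G}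
    (h : ((((Subgroup.normalizer ((P : Subgroup G) : Set G)) : Subgroup G) : Set G)
            * (conjS x (Subgroup.normalizer ((P : Subgroup G) : Set G)) : Set G) : Set G)
       = (conjS x (Subgroup.normalizer ((P : Subgroup G) : Set G)) : Set G)
            * (((Subgroup.normalizer ((P : Subgroup G) : Set G)) : Subgroup G) : Set G)) :
    x ∈ (Subgroup.normalizer ((P : Subgroup G) : Set G)) := by
  set N := (Subgroup.normalizer ((P : Subgroup G) : Set G)) with hN
  set J := N ⊔ conjS x N with hJ
  have hJcoe : (J : Set G) = (N : Set G) * (conjS x N : Set G) := coe_sup_of_mul_comm h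
  have hNJ : N ≤ J := le_sup_left
  have hPJ : (P : Subgroup G) ≤ J := le_trans Subgroup.le_normalizer hNJ
  have hPxJ : ((x⁻¹ • P : Sylow p G) : Subgroup G) ≤ J := by
    calc ((x⁻¹ • P : Sylow p G) : Subgroup G) = conjS x (P : Subgroup G) := rfl
    _ ≤ conjS x N := conjS_mono Subgroup.le_normalizer
    _ ≤ J := le_sup_right
  obtain ⟨k, hk⟩ := MulAction.exists_smul_eq (↥J) (P.subtype hPJ) ((x⁻¹ • P).subtype hPxJ)
  rw [Sylow.smul_subtype hPJ k] at hk
  have hk2 : ((k : G) • P : Sylow p G) = x⁻¹ • P := by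
    have hcoe : ((k : G) • P : Sylow p G) = k • P := rfl
    have h1 := congrArg (fun S : Sylow p ↥J => Subgroup.map J.subtype (S : Subgroup ↥J)) hk
    simp only [Sylow.coe_subtype, Subgroup.subgroupOf_map_subtype] at h1
    apply Sylow.ext
    rw [hcoe]
    have hle1 : ((k • P : Sylow p G) : Subgroup G) ≤ J := Sylow.smul_le hPJ k
    calc ((k • P : Sylow p G) : Subgroup G) = ((k • P : Sylow p G) : Subgroup G) ⊓ J :=
      (inf_of_le_left hle1).symm
    _ = ((x⁻¹ • P : Sylow p G) : Subgroup G) ⊓ J := h1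
    _ = ((x⁻¹ • P : Sylow p G) : Subgroup G) := inf_of_le_left hPxJ
  have hxk : (x * (k : G)) • P = P := by
    rw [mul_smul, hk2, smul_inv_smul]
  have hxkN : x * (k : G) ∈ N := Sylow.smul_eq_iff_mem_normalizer.mp hxk
  have hkJ : ((k : G))⁻¹ ∈ (J : Set G) := by
    have h5 := (k⁻¹ : ↥J).2
    simpa using h5
  rw [hJcoe] at hkJ
  obtain ⟨n, hn, y, hy, hny⟩ := hkJ
  have hny' : n * y = ((k : G))⁻¹ := hny
  apply mem_of_mem_mul_conjS (H := N)
  refine ⟨(x * (k : G)) * n, mul_mem hxkN hn, y, hy, ?_⟩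
  show x * (k : G) * n * y = x
  rw [mul_assoc (x * (k : G)), hny']
  group

end Layer3
section Layer4

variable {G : Type*} [Group G]

lemma centralizer_normal {N : Subgroup G} (hN : N.Normal) :
    (Subgroup.centralizer (N : Set G)).Normal := by
  constructor
  intro n hn g
  have h := map_conj_centralizer_eq g hN
  rw [← h]
  exact Subgroup.mem_map.2 ⟨n, hn, rfl⟩

variable [Finite G]

/-- In a subgroup `N` with a normal Sylow `q`-subgroup `S`, the image of `S` in `G` is
exactly the set of `q`-elements of `N`. -/
lemma mem_map_sylow_iff {N : Subgroup G} {q : ℕ} [Fact q.Prime] (S : Sylow q ↥N)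
    (hS : (S : Subgroup ↥N).Normal) {y : G} :
    y ∈ Subgroup.map N.subtype (S : Subgroup ↥N) ↔ y ∈ N ∧ ∃ k, y ^ q ^ k = 1 := by
  constructor
  · rintro ⟨s, hs, rfl⟩
    refine ⟨s.2, ?_⟩
    obtain ⟨k, hk⟩ := S.2 ⟨s, hs⟩
    refine ⟨k, ?_⟩
    have h1 : ((⟨s, hs⟩ : ↥(S : Subgroup ↥N)) ^ q ^ k : ↥(S : Subgroup ↥N)) = 1 := hk
    have h2 : (s ^ q ^ k : ↥N) = 1 := by
      have := congrArg (fun z : ↥(S : Subgroup ↥N) => (z : ↥N)) h1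
      simpa using this
    have := congrArg (fun z : ↥N => (z : G)) h2
    simpa using this
  · rintro ⟨hyN, k, hk⟩
    haveI := hS
    haveI : (S : Subgroup ↥N).FiniteIndex := ⟨Subgroup.index_ne_zero_of_finite⟩
    set s : ↥N := ⟨y, hyN⟩ with hs
    have hmk : ((QuotientGroup.mk s : ↥N ⧸ (S : Subgroup ↥N))) ^ q ^ k = 1 := by
      rw [← QuotientGroup.mk_pow]
      rw [QuotientGroup.eq_one_iff]
      have : (s ^ q ^ k : ↥N) = 1 := by
        apply Subtype.ext
        simpa using hk
      rw [this]
      exact Subgroup.one_mem _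
    have hdvd1 : orderOf (QuotientGroup.mk s : ↥N ⧸ (S : Subgroup ↥N)) ∣ q ^ k :=
      orderOf_dvd_of_pow_eq_one hmk
    have hdvd2 : orderOf (QuotientGroup.mk s : ↥N ⧸ (S : Subgroup ↥N))
        ∣ (S : Subgroup ↥N).index := by
      rw [Subgroup.index_eq_card]
      exact orderOf_dvd_natCard _
    obtain ⟨j, hjk, hj⟩ := (Nat.dvd_prime_pow (Fact.out : q.Prime)).mp hdvd1
    have hj0 : j = 0 := by
      by_contra hj0
      have hqdvd : q ∣ (S : Subgroup ↥N).index := by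
        calc q ∣ q ^ j := dvd_pow_self q hj0
        _ = orderOf _ := hj.symm
        _ ∣ _ := hdvd2
      exact S.not_dvd_index hqdvd
    have hord1 : orderOf (QuotientGroup.mk s : ↥N ⧸ (S : Subgroup ↥N)) = 1 := by
      rw [hj, hj0, pow_zero]
    have : (QuotientGroup.mk s : ↥N ⧸ (S : Subgroup ↥N)) = 1 := orderOf_eq_one_iff.mp hord1
    rw [QuotientGroup.eq_one_iff] at this
    exact ⟨s, this, rfl⟩

lemma main_of_cond1
    (hcond : ∀ M : Subgroup G, IsCoatom M → ∀ (p : ℕ), p.Prime → ∀ P : Sylow p ↥M,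
        IsRCP (FStar G : Set G) (Subgroup.map M.subtype (P : Subgroup ↥M)))
    {p : ℕ} (hp : p.Prime) (P : Sylow p G) : FStar G ≤ (Subgroup.normalizer ((P : Subgroup G) : Set G)) := by
  haveI := Fact.mk hp
  by_cases htop : (Subgroup.normalizer ((P : Subgroup G) : Set G)) = ⊤
  · rw [htop]; exact le_top
  obtain ⟨M, hM, hNM⟩ := exists_le_coatom_of_ne_top htop
  have hPM : (P : Subgroup G) ≤ M := le_trans Subgroup.le_normalizer hNM
  have hrcp := hcond M hM p hp (P.subtype hPM)
  have hmap : Subgroup.map M.subtype ((P.subtype hPM : Subgroup ↥M)) = (P : Subgroup G) := by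
    rw [Sylow.coe_subtype, Subgroup.subgroupOf_map_subtype, inf_of_le_left hPM]
  rw [hmap] at hrcp
  intro x hx
  exact sylow_perm_case1 P (hrcp x hx)

lemma main_of_cond2
    (hcond : ∀ M : Subgroup G, IsCoatom M → ∀ (p : ℕ), p.Prime → ∀ P : Sylow p ↥M,
        IsRCP (FStar G : Set G)
          (Subgroup.map M.subtype (Subgroup.normalizer ((P : Subgroup ↥M) : Set ↥M))))
    {p : ℕ} (hp : p.Prime) (P : Sylow p G) : FStar G ≤ (Subgroup.normalizer ((P : Subgroup G) : Set G)) := by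
  haveI := Fact.mk hp
  by_cases htop : (Subgroup.normalizer ((P : Subgroup G) : Set G)) = ⊤
  · rw [htop]; exact le_top
  obtain ⟨M, hM, hNM⟩ := exists_le_coatom_of_ne_top htop
  have hPM : (P : Subgroup G) ≤ M := le_trans Subgroup.le_normalizer hNM
  have hrcp := hcond M hM p hp (P.subtype hPM)
  have hmap : Subgroup.map M.subtype (Subgroup.normalizer (((P.subtype hPM : Subgroup ↥M)) : Set ↥M))
      = (Subgroup.normalizer ((P : Subgroup G) : Set G)) := by
    rw [Sylow.coe_subtype]
    exact map_subtype_normalizer_eq hNM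
  rw [hmap] at hrcp
  intro x hx
  exact sylow_perm_case2 P (hrcp x hx)

end Layer4
section Layer5

variable {G : Type*} [Group G] [Finite G]

lemma centralizer_Fitting_le (hFF : Fitting G = FStar G) :
    Subgroup.centralizer ((Fitting G : Subgroup G) : Set G) ≤ Fitting G := by
  have hkey := hFF.symm
  unfold FStar at hkey
  by_contra hcon
  have hmapcomap := congrArg (Subgroup.map (QuotientGroup.mk' (Fitting G))) hkey
  rw [Subgroup.map_comap_eq_self_of_surjective (QuotientGroup.mk'_surjective (Fitting G))]
    at hmapcomap
  have hFbot : Subgroup.map (QuotientGroup.mk' (Fitting G)) (Fitting G) = ⊥ :=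
    (Subgroup.map_eq_bot_iff _).mpr (le_of_eq (QuotientGroup.ker_mk' (Fitting G)).symm)
  rw [hFbot] at hmapcomap
  have hsocbot := (Subgroup.map_eq_bot_iff _).mp hmapcomap
  rw [Subgroup.ker_subtype, le_bot_iff] at hsocbot
  have hSne : (Subgroup.centralizer ((Fitting G : Subgroup G) : Set G) ⊔ Fitting G).map
      (QuotientGroup.mk' (Fitting G)) ≠ ⊥ := by
    intro hb
    apply hcon
    have hle3 := (Subgroup.map_eq_bot_iff _).mp hb
    rw [QuotientGroup.ker_mk'] at hle3
    exact le_trans le_sup_left hle3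
  haveI : Nontrivial ↥((Subgroup.centralizer ((Fitting G : Subgroup G) : Set G) ⊔ Fitting G).map
      (QuotientGroup.mk' (Fitting G))) := (Subgroup.nontrivial_iff_ne_bot _).mpr hSne
  obtain ⟨Nmin, hNmin⟩ := exists_isMinimalNormal
    (G := ↥((Subgroup.centralizer ((Fitting G : Subgroup G) : Set G) ⊔ Fitting G).map
      (QuotientGroup.mk' (Fitting G))))
  have hle4 : Nmin ≤ socle' _ := le_sSup hNmin
  rw [hsocbot, le_bot_iff] at hle4
  exact hNmin.2.1 hle4

lemma isNilpotent_of_fstar_le_normalizer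
    (hmain : ∀ (p : ℕ), p.Prime → ∀ P : Sylow p G, FStar G ≤ (Subgroup.normalizer ((P : Subgroup G) : Set G))) :
    Group.IsNilpotent G := by
  classical
  -- Step 1 : F* is nilpotent
  have hFnil : Group.IsNilpotent ↥(FStar G) := by
    apply ((isNilpotent_of_finite_tfae (G := ↥(FStar G))).out 3 0).mp
    intro q hq S
    have hmapS : IsPGroup q (Subgroup.map (FStar G).subtype (S : Subgroup ↥(FStar G))) :=
      S.2.map _
    obtain ⟨R, hSR⟩ := hmapS.exists_le_sylow
    have hNR := hmain q hq.out R
    have hpg : IsPGroup q ((R : Subgroup G).subgroupOf (FStar G)) := R.2.comap_subtype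
    have hle : (S : Subgroup ↥(FStar G)) ≤ (R : Subgroup G).subgroupOf (FStar G) := by
      intro s hs
      rw [Subgroup.mem_subgroupOf]
      exact hSR (Subgroup.mem_map.mpr ⟨s, hs, rfl⟩)
    have heq : (R : Subgroup G).subgroupOf (FStar G) = (S : Subgroup ↥(FStar G)) := S.3 hpg hle
    rw [← heq]
    constructor
    intro n hn g
    rw [Subgroup.mem_subgroupOf] at hn ⊢
    have hgR : (↑g : G) ∈ (Subgroup.normalizer ((R : Subgroup G) : Set G)) := hNR g.2
    have h2 := (Subgroup.mem_normalizer_iff.mp hgR (↑n : G)).mp hn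
    simpa using h2
  -- Step 2 : F* = F
  have hFF : Fitting G = FStar G :=
    le_antisymm (Fitting_le_FStar G) (le_sSup ⟨FStar_normal G, hFnil⟩)
  have hNnil : Group.IsNilpotent ↥(Fitting G) := by rw [hFF]; exact hFnil
  have hC : Subgroup.centralizer ((Fitting G : Subgroup G) : Set G) ≤ Fitting G :=
    centralizer_Fitting_le hFF
  have hFleN : ∀ (q : ℕ), q.Prime → ∀ R : Sylow q G,
      Fitting G ≤ (Subgroup.normalizer ((R : Subgroup G) : Set G)) := by
    intro q hq R
    rw [hFF]
    exact hmain q hq R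
  -- Step 3 : the Sylow subgroups of F
  let Qs : (q : ℕ) → Sylow q ↥(Fitting G) := fun q => Classical.arbitrary _
  let Oq : ℕ → Subgroup G := fun q => Subgroup.map (Fitting G).subtype (Qs q : Subgroup ↥(Fitting G))
  have hQnormal : ∀ (q : ℕ), q.Prime → ((Qs q : Subgroup ↥(Fitting G))).Normal := by
    intro q hq
    have h03 := ((isNilpotent_of_finite_tfae (G := ↥(Fitting G))).out 0 3).mp hNnil
    exact h03 q (Fact.mk hq) (Qs q)
  have hOmem : ∀ (q : ℕ), q.Prime → ∀ y : G,
      (y ∈ Oq q ↔ y ∈ Fitting G ∧ ∃ k, y ^ q ^ k = 1) := by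
    intro q hq y
    haveI := Fact.mk hq
    exact mem_map_sylow_iff (Qs q) (hQnormal q hq)
  have hOnormal : ∀ (q : ℕ), q.Prime → (Oq q).Normal := by
    intro q hq
    constructor
    intro n hn g
    rw [hOmem q hq] at hn ⊢
    obtain ⟨hnF, k, hk⟩ := hn
    refine ⟨(Fitting_normal G).conj_mem n hnF g, k, ?_⟩
    rw [conj_pow, hk, mul_one, mul_inv_cancel]
  have hOleF : ∀ q : ℕ, Oq q ≤ Fitting G := fun q => Subgroup.map_subtype_le _
  -- Step 4 : Sylow r-subgroups centralize Oq for r ≠ q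
  have hcomm : ∀ (q r : ℕ), q.Prime → r.Prime → q ≠ r → ∀ R : Sylow r G,
      (R : Subgroup G) ≤ Subgroup.centralizer (Oq q : Set G) := by
    intro q r hq hr hqr R z hz
    rw [Subgroup.mem_centralizer_iff]
    intro y hy
    have hy : y ∈ Oq q := hy
    have hyF : y ∈ Fitting G := hOleF q hy
    have hyNR : y ∈ (Subgroup.normalizer ((R : Subgroup G) : Set G)) := hFleN r hr R hyF
    have hcR : y⁻¹ * (z⁻¹ * y * z) ∈ (R : Subgroup G) := by
      have h1 : y⁻¹ * z⁻¹ * y ∈ (R : Subgroup G) := by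
        have h2 := (Subgroup.mem_normalizer_iff.mp
          (Subgroup.inv_mem _ hyNR) z⁻¹).mp (Subgroup.inv_mem _ hz)
        simpa using h2
      have h3 := Subgroup.mul_mem _ h1 hz
      have h4 : y⁻¹ * z⁻¹ * y * z = y⁻¹ * (z⁻¹ * y * z) := by group
      rwa [h4] at h3
    have hcO : y⁻¹ * (z⁻¹ * y * z) ∈ Oq q := by
      have h1 : z⁻¹ * y * z ∈ Oq q := by
        have h5 := (hOnormal q hq).conj_mem y hy z⁻¹
        simpa using h5
      exact Subgroup.mul_mem _ (Subgroup.inv_mem _ hy) h1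
    obtain ⟨-, k, hk⟩ := (hOmem q hq _).mp hcO
    obtain ⟨l, hl⟩ : ∃ l, (y⁻¹ * (z⁻¹ * y * z)) ^ r ^ l = 1 := by
      obtain ⟨l, hl⟩ := R.2 ⟨_, hcR⟩
      refine ⟨l, ?_⟩
      have h6 := congrArg (fun t : ↥(R : Subgroup G) => (t : G)) hl
      simpa using h6
    have hco : Nat.Coprime (q ^ k) (r ^ l) :=
      Nat.Coprime.pow _ _ ((Nat.coprime_primes hq hr).mpr hqr)
    have hc1 : y⁻¹ * (z⁻¹ * y * z) = 1 := by
      have hd : orderOf (y⁻¹ * (z⁻¹ * y * z)) ∣ Nat.gcd (q ^ k) (r ^ l) :=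
        Nat.dvd_gcd (orderOf_dvd_of_pow_eq_one hk) (orderOf_dvd_of_pow_eq_one hl)
      rw [Nat.Coprime] at hco
      rw [hco, Nat.dvd_one] at hd
      exact orderOf_eq_one_iff.mp hd
    have h7 : z⁻¹ * y * z = y := by
      calc z⁻¹ * y * z = y * (y⁻¹ * (z⁻¹ * y * z)) := by group
      _ = y * 1 := by rw [hc1]
      _ = y := mul_one y
    calc y * z = z * (z⁻¹ * y * z) := by group
    _ = z * y := by rw [h7]
  -- Step 5 : the index of the centralizer of Oq is a q-power
  have hTindex : ∀ (q : ℕ), q.Prime →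
      ∃ m, (Subgroup.centralizer (Oq q : Set G)).index = q ^ m := by
    intro q hq
    have hn0 : (Subgroup.centralizer (Oq q : Set G)).index ≠ 0 :=
      Subgroup.index_ne_zero_of_finite
    refine ⟨_, Nat.eq_prime_pow_of_unique_prime_dvd hn0 ?_⟩
    intro d hd hdn
    by_contra hdq
    haveI := Fact.mk hd
    have hqd : q ≠ d := fun h => hdq h.symm
    set R : Sylow d G := Classical.arbitrary _ with hR
    have hRle : (R : Subgroup G) ≤ Subgroup.centralizer (Oq q : Set G) :=
      hcomm q d hq hd hqd R
    have hdvd : (Subgroup.centralizer (Oq q : Set G)).index ∣ (R : Subgroup G).index :=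
      Subgroup.index_dvd_of_le hRle
    haveI : (R : Subgroup G).FiniteIndex := ⟨Subgroup.index_ne_zero_of_finite⟩
    exact R.not_dvd_index (dvd_trans hdn hdvd)
  -- Step 6 : F is generated by the Oq
  have hgen : (⨆ q ∈ (Nat.card ↥(Fitting G)).primeFactors, Oq q) = Fitting G := by
    apply subgroup_eq_of_le_of_card_le
    · apply iSup_le; intro q; apply iSup_le; intro hq; exact hOleF q
    · have hY0 : Nat.card ↥(⨆ q ∈ (Nat.card ↥(Fitting G)).primeFactors, Oq q) ≠ 0 :=
        Nat.card_pos.ne'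
      have hF0 : Nat.card ↥(Fitting G) ≠ 0 := Nat.card_pos.ne'
      have hdvd : Nat.card ↥(Fitting G)
          ∣ Nat.card ↥(⨆ q ∈ (Nat.card ↥(Fitting G)).primeFactors, Oq q) := by
        rw [← Nat.factorization_le_iff_dvd hF0 hY0]
        apply (Finsupp.le_iff _ _).mpr
        intro q hqsupp
        rw [Nat.support_factorization] at hqsupp
        have hq : q.Prime := Nat.prime_of_mem_primeFactors hqsupp
        haveI := Fact.mk hq
        have hcardQ : Nat.card (Qs q) = q ^ (Nat.card ↥(Fitting G)).factorization q :=
          Sylow.card_eq_multiplicity (Qs q)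
        have hcardO : Nat.card (Oq q) = Nat.card (Qs q) := by
          have hinj : Function.Injective ⇑(Fitting G).subtype := Subtype.coe_injective
          exact (Nat.card_congr
            (((Qs q : Subgroup ↥(Fitting G))).equivMapOfInjective _ hinj).toEquiv).symm
        have hOle : Oq q ≤ ⨆ q ∈ (Nat.card ↥(Fitting G)).primeFactors, Oq q :=
          le_iSup₂ (f := fun q _ => Oq q) q hqsupp
        have hdq : q ^ (Nat.card ↥(Fitting G)).factorization q
            ∣ Nat.card ↥(⨆ q ∈ (Nat.card ↥(Fitting G)).primeFactors, Oq q) := by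
          rw [← hcardQ, ← hcardO]
          exact Subgroup.card_dvd_of_le hOle
        exact (Nat.Prime.pow_dvd_iff_le_factorization hq hY0).mp hdq
      exact Nat.le_of_dvd Nat.card_pos hdvd
  -- Step 7 : the homomorphism to the product of quotients
  haveI hTnormal' : ∀ q : (Nat.card ↥(Fitting G)).primeFactors,
      (Subgroup.centralizer (Oq ↑q : Set G)).Normal :=
    fun q => centralizer_normal (hOnormal ↑q (Nat.prime_of_mem_primeFactors q.2))
  let φ : G →* ((q : (Nat.card ↥(Fitting G)).primeFactors) →
      G ⧸ Subgroup.centralizer (Oq ↑q : Set G)) :=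
    { toFun := fun g q => QuotientGroup.mk g
      map_one' := rfl
      map_mul' := fun a b => rfl }
  have hker : φ.ker ≤ Subgroup.centralizer ((Fitting G : Subgroup G) : Set G) := by
    intro x hx
    rw [Subgroup.mem_centralizer_iff]
    intro y hy
    have hy' : y ∈ (⨆ q ∈ (Nat.card ↥(Fitting G)).primeFactors, Oq q) := by
      rw [hgen]; exact hy
    rw [iSup_subtype'] at hy'
    refine Subgroup.iSup_induction (C := fun w => w * x = x * w) _ hy' ?_ ?_ ?_
    · intro q w hwO
      have hφx : φ x = 1 := MonoidHom.mem_ker.mp hx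
      have hq1 := congrFun hφx q
      have hxT : x ∈ Subgroup.centralizer (Oq ↑q : Set G) :=
        (QuotientGroup.eq_one_iff x).mp hq1
      exact Subgroup.mem_centralizer_iff.mp hxT w hwO
    · show (1 : G) * x = x * 1
      rw [one_mul, mul_one]
    · intro a b ha hb
      show a * b * x = x * (a * b)
      calc a * b * x = a * (b * x) := by rw [mul_assoc]
      _ = a * (x * b) := by rw [hb]
      _ = (a * x) * b := by rw [mul_assoc]
      _ = (x * a) * b := by rw [ha]
      _ = x * (a * b) := by rw [mul_assoc]
  -- Step 8 : G ⧸ ker φ is nilpotent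
  haveI hfac : ∀ q : (Nat.card ↥(Fitting G)).primeFactors,
      Group.IsNilpotent (G ⧸ Subgroup.centralizer (Oq ↑q : Set G)) := by
    intro q
    have hq : (↑q : ℕ).Prime := Nat.prime_of_mem_primeFactors q.2
    haveI := Fact.mk hq
    obtain ⟨m, hm⟩ := hTindex ↑q hq
    have hpg : IsPGroup ↑q (G ⧸ Subgroup.centralizer (Oq ↑q : Set G)) :=
      IsPGroup.of_card (by rw [← Subgroup.index_eq_card, hm])
    exact hpg.isNilpotent
  have hquot : Group.IsNilpotent (G ⧸ φ.ker) := by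
    haveI : Group.IsNilpotent ↥φ.range := Subgroup.isNilpotent _
    exact nilpotent_of_mulEquiv (QuotientGroup.quotientKerEquivRange φ).symm
  -- Step 9 : every Sylow subgroup of G is normal
  apply ((isNilpotent_of_finite_tfae (G := G)).out 3 0).mp
  intro p hp P
  have hPbar : IsPGroup p ((P : Subgroup G).map (QuotientGroup.mk' φ.ker)) := P.2.map _
  obtain ⟨Sb, hSb⟩ := hPbar.exists_le_sylow
  have h03' := ((isNilpotent_of_finite_tfae (G := G ⧸ φ.ker)).out 0 3).mp hquot
  haveI hSbn : (Sb : Subgroup (G ⧸ φ.ker)).Normal := h03' p hp Sb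
  haveI : (P : Subgroup G).FiniteIndex := ⟨Subgroup.index_ne_zero_of_finite⟩
  have hindmap : ¬ p ∣ ((P : Subgroup G).map (QuotientGroup.mk' φ.ker)).index := by
    intro hdvd
    apply P.not_dvd_index
    have h1 := Subgroup.index_map (H := (P : Subgroup G)) (QuotientGroup.mk' φ.ker)
    rw [MonoidHom.range_eq_top_of_surjective (QuotientGroup.mk' φ.ker)
      (QuotientGroup.mk'_surjective φ.ker),
      Subgroup.index_top, mul_one, QuotientGroup.ker_mk'] at h1
    have h2 : ((P : Subgroup G) ⊔ φ.ker).index ∣ (P : Subgroup G).index :=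
      Subgroup.index_dvd_of_le le_sup_left
    rw [h1] at hdvd
    exact dvd_trans hdvd h2
  have heqS : (P : Subgroup G).map (QuotientGroup.mk' φ.ker) = ↑Sb := by
    have hrel1 := Subgroup.relIndex_mul_index hSb
    have hreldvd : ((P : Subgroup G).map (QuotientGroup.mk' φ.ker)).relIndex ↑Sb
        ∣ Nat.card ↥(Sb : Subgroup (G ⧸ φ.ker)) := by
      rw [Subgroup.relIndex]
      exact Dvd.intro _ (Subgroup.index_mul_card
        (H := ((P : Subgroup G).map (QuotientGroup.mk' φ.ker)).subgroupOf
          (Sb : Subgroup (G ⧸ φ.ker))))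
    obtain ⟨b, hb⟩ := IsPGroup.iff_card.mp Sb.2
    rw [hb] at hreldvd
    obtain ⟨j, hjb, hj⟩ := (Nat.dvd_prime_pow hp.out).mp hreldvd
    have hj0 : j = 0 := by
      by_contra h0
      apply hindmap
      calc p ∣ p ^ j := dvd_pow_self p h0
      _ = _ := hj.symm
      _ ∣ _ := Dvd.intro _ hrel1
    have hrel_one : ((P : Subgroup G).map (QuotientGroup.mk' φ.ker)).relIndex ↑Sb = 1 := by
      rw [hj, hj0, pow_zero]
    have hSle : (Sb : Subgroup (G ⧸ φ.ker)) ≤ (P : Subgroup G).map (QuotientGroup.mk' φ.ker) :=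
      Subgroup.relIndex_eq_one.mp hrel_one
    exact le_antisymm hSb hSle
  have hmapnormal : ((P : Subgroup G).map (QuotientGroup.mk' φ.ker)).Normal := by
    rw [heqS]; exact hSbn
  have hBnormal : ((P : Subgroup G) ⊔ φ.ker).Normal := by
    have hcm : Subgroup.comap (QuotientGroup.mk' φ.ker)
        ((P : Subgroup G).map (QuotientGroup.mk' φ.ker)) = (P : Subgroup G) ⊔ φ.ker := by
      rw [Subgroup.comap_map_eq, QuotientGroup.ker_mk']
    rw [← hcm]
    exact Subgroup.Normal.comap hmapnormal _
  haveI := hBnormal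
  have hfrat := Sylow.normalizer_sup_eq_top' (N := (P : Subgroup G) ⊔ φ.ker) P le_sup_left
  have hBle : (P : Subgroup G) ⊔ φ.ker ≤ (Subgroup.normalizer ((P : Subgroup G) : Set G)) := by
    apply sup_le Subgroup.le_normalizer
    calc φ.ker ≤ Subgroup.centralizer ((Fitting G : Subgroup G) : Set G) := hker
    _ ≤ Fitting G := hC
    _ ≤ (Subgroup.normalizer ((P : Subgroup G) : Set G)) := hFleN p hp.out P
  have hntop : (Subgroup.normalizer ((P : Subgroup G) : Set G)) = ⊤ := by
    rw [← hfrat]; exact (sup_of_le_left hBle).symm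
  exact Subgroup.normalizer_eq_top_iff.mp hntop

end Layer5
section Layer6

variable {G : Type*} [Group G] [Finite G]

lemma forward_cond1 (hnil : Group.IsNilpotent G) (M : Subgroup G) (hM : IsCoatom M)
    (p : ℕ) (hp : p.Prime) (P : Sylow p ↥M) :
    IsRCP (FStar G : Set G) (Subgroup.map M.subtype (P : Subgroup ↥M)) := by
  haveI := Fact.mk hp
  haveI := hnil
  have hMnormal : M.Normal := by
    have h := ((isNilpotent_of_finite_tfae (G := G)).out 0 2).mp hnil
    exact h M hM
  have hPn : (P : Subgroup ↥M).Normal := by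
    have h := ((isNilpotent_of_finite_tfae (G := ↥M)).out 0 3).mp (Subgroup.isNilpotent M)
    exact h p (Fact.mk hp) P
  have hHn : (Subgroup.map M.subtype (P : Subgroup ↥M)).Normal := by
    constructor
    intro n hn g
    rw [mem_map_sylow_iff P hPn] at hn ⊢
    obtain ⟨hnM, k, hk⟩ := hn
    exact ⟨hMnormal.conj_mem n hnM g, k, by rw [conj_pow, hk, mul_one, mul_inv_cancel]⟩
  intro x hx
  have hcs : conjS x (Subgroup.map M.subtype (P : Subgroup ↥M))
      = Subgroup.map M.subtype (P : Subgroup ↥M) := map_conj_eq_self hHn x⁻¹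
  rw [hcs]

lemma forward_cond2 (hnil : Group.IsNilpotent G) (M : Subgroup G) (hM : IsCoatom M)
    (p : ℕ) (hp : p.Prime) (P : Sylow p ↥M) :
    IsRCP (FStar G : Set G)
      (Subgroup.map M.subtype (Subgroup.normalizer ((P : Subgroup ↥M) : Set ↥M))) := by
  haveI := Fact.mk hp
  haveI := hnil
  have hMnormal : M.Normal := by
    have h := ((isNilpotent_of_finite_tfae (G := G)).out 0 2).mp hnil
    exact h M hM
  have hPn : (P : Subgroup ↥M).Normal := by
    have h := ((isNilpotent_of_finite_tfae (G := ↥M)).out 0 3).mp (Subgroup.isNilpotent M)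
    exact h p (Fact.mk hp) P
  have hNt : (Subgroup.normalizer ((P : Subgroup ↥M) : Set ↥M)) = ⊤ := Subgroup.normalizer_eq_top_iff (H := (P : Subgroup ↥M)).mpr hPn
  have hHM : Subgroup.map M.subtype (Subgroup.normalizer ((P : Subgroup ↥M) : Set ↥M)) = M := by
    rw [hNt, ← MonoidHom.range_eq_map, Subgroup.range_subtype]
  intro x hx
  have hcs : conjS x (Subgroup.map M.subtype (Subgroup.normalizer ((P : Subgroup ↥M) : Set ↥M)))
      = Subgroup.map M.subtype (Subgroup.normalizer ((P : Subgroup ↥M) : Set ↥M)) := by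
    rw [hHM]
    exact map_conj_eq_self hMnormal x⁻¹
  rw [hcs]

end Layer6

theorem nilpotent_iff_sylow_of_maximal_fstar_conjugate_permutable
    (G : Type*) [Group G] [Finite G] :
    (Group.IsNilpotent G ↔
        ∀ M : Subgroup G, IsCoatom M → ∀ (p : ℕ), p.Prime → ∀ P : Sylow p ↥M,
          IsRCP (FStar G : Set G) (Subgroup.map M.subtype (P : Subgroup ↥M))) ∧
    (Group.IsNilpotent G ↔
        ∀ M : Subgroup G, IsCoatom M → ∀ (p : ℕ), p.Prime → ∀ P : Sylow p ↥M,
          IsRCP (FStar G : Set G)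
            (Subgroup.map M.subtype (Subgroup.normalizer ((P : Subgroup ↥M) : Set ↥M)))) := by
  
  constructor
  · constructor
    · intro hnil M hM p hp P
      exact forward_cond1 hnil M hM p hp P
    · intro hcond
      exact isNilpotent_of_fstar_le_normalizer (fun p hp P => main_of_cond1 hcond hp P)
  · constructor
    · intro hnil M hM p hp P
      exact forward_cond2 hnil M hM p hp P
    · intro hcond
      exact isNilpotent_of_fstar_le_normalizer (fun p hp P => main_of_cond2 hcond hp P)
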